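/- Let s ≥ 1 and let m₁, m₂, n₁, n₂, M, N be real parameters with 0 < N < 1, M > N + s, n₁ > 1 + √3, n₂ > 1, m₁ > √2, and m₂ > max{ n₂, ((m₁n₁ + M m₁² n₁ + n₁²)/m₁²)^{1/(1-N)}, ((n₁/(2m₁))(1+√5))^{1/(M-N-s)} }. Set m* = m₁ m₂^M and n* = n₁ n₂^N. Let K > 0, let T ∈ (0, ∞], let A : [0,T) → ℝ be continuous with −(t+1)^s ≤ A(t) ≤ K for all t ∈ [0,T), and let d, ρ : [0,T) → ℝ be differentiable solutions of d' = −d²/2 + A(t)ρ² − ρ + 1 and ρ' = −ρ d on [0,T). If ρ(0) > 0, d(0) > 0, and d(0) > m* ρ(0) − n*, then there exists a constant C > 0, independent of T, such that 0 < ρ(t) ≤ C and 0 < d(t) ≤ C for all t ∈ [0,T). -/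

import Mathlib

set_option maxHeartbeats 1000000
open Real Filter Set Topology

lemma ep_rpow_base_anti {a b e : ℝ} (ha : 1 ≤ a) (hab : a ≤ b) (he : e ≤ 0) :
    b ^ e ≤ a ^ e := by
  have ha0 : (0:ℝ) < a := lt_of_lt_of_le one_pos ha
  have hb0 : (0:ℝ) < b := lt_of_lt_of_le ha0 hab
  rw [show e = -(-e) by ring, Real.rpow_neg ha0.le, Real.rpow_neg hb0.le]
  have h1 : a ^ (-e) ≤ b ^ (-e) := Real.rpow_le_rpow ha0.le hab (by linarith)
  have h2 : 0 < a ^ (-e) := Real.rpow_pos_of_pos ha0 _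
  exact inv_anti₀ h2 h1

lemma ep_one_le_rpow {a e : ℝ} (ha : 1 ≤ a) (he : 0 ≤ e) : 1 ≤ a ^ e := by
  calc (1:ℝ) = 1 ^ e := (Real.one_rpow e).symm
  _ ≤ a ^ e := Real.rpow_le_rpow (by norm_num) ha he

lemma ep_zoneB (s N M m₁ n₁ n₂ m₂ : ℝ)
    (hm₁ : 0 < m₁) (hm₁2 : 2 < m₁^2) (hn₁ : 0 < n₁) (hs : 1 ≤ s)
    (hN0 : 0 < N) (hN1 : N < 1) (hM : M > N + s) (hM1 : 1 < M)
    (hn₂ : 1 < n₂) (hm₂n₂ : n₂ < m₂) (hm₂Mn₁ : M*n₁ < m₂)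
    (hκ : (n₁^2 + m₁*n₁ + M*m₁^2*n₁) * m₂^(N-1) < m₁^2)
    (hnum : m₁ + m₁^2 + 2*n₁ ≤ n₁^2*m₁^2)
    (t ρv Av : ℝ) (ht : 0 ≤ t)
    (hAv : -(t+1)^s ≤ Av)
    (hρv : n₁*(t+n₂)^N ≤ ρv * (m₁*(t+m₂)^M)) :
    0 < (m₁*(t+m₂)^M)^2*ρv^2/2 + Av*ρv^2 - (1 + M*m₁*(t+m₂)^(M-1))*ρv
        + 1 - (n₁*(t+n₂)^N)^2/2 + N*n₁*(t+n₂)^(N-1) := by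
  have hm₂1 : 1 < m₂ := lt_trans hn₂ hm₂n₂
  set P := t + m₂ with hPdef
  have hP0 : (0:ℝ) < P := by simp only [hPdef]; linarith
  have hPm₂ : m₂ ≤ P := by simp only [hPdef]; linarith
  have hP1 : 1 < P := lt_of_lt_of_le hm₂1 hPm₂
  set pm := P ^ M with hpmdef
  set pm1 := P ^ (M-1) with hpm1def
  set pq := (t+n₂) ^ N with hpqdef
  set pq1 := (t+n₂) ^ (N-1) with hpq1def
  set pr := (t+1) ^ s with hprdef
  set ps := P ^ s with hpsdef
  set pn := P ^ N with hpndef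
  have hQ1 : (1:ℝ) ≤ t + n₂ := by linarith
  have hQP : t + n₂ ≤ P := by simp only [hPdef]; linarith
  have hpm0 : 0 < pm := Real.rpow_pos_of_pos hP0 _
  have hpm10 : 0 < pm1 := Real.rpow_pos_of_pos hP0 _
  have hps0 : 0 < ps := Real.rpow_pos_of_pos hP0 _
  have hpn0 : 0 < pn := Real.rpow_pos_of_pos hP0 _
  have hpq0 : 0 < pq := Real.rpow_pos_of_pos (by linarith) _
  have hpq1nn : 0 ≤ pq1 := (Real.rpow_pos_of_pos (by linarith) _).le
  have hpr0 : 0 < pr := Real.rpow_pos_of_pos (by linarith) _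
  have hPN10 : 0 < P ^ (N-1) := Real.rpow_pos_of_pos hP0 _
  have hpq1' : 1 ≤ pq := ep_one_le_rpow hQ1 hN0.le
  have hpm1' : 1 ≤ pm := ep_one_le_rpow hP1.le (by linarith)
  -- structural identities
  have id1 : pm1 * P = pm := by
    have h := Real.rpow_add hP0 (M-1) 1
    rw [Real.rpow_one] at h
    rw [hpm1def, hpmdef, ← h]
    norm_num
  have id2 : ps * (pn * pn) = P ^ (s + N + N) := by
    rw [hpsdef, hpndef, Real.rpow_add hP0, Real.rpow_add hP0]; ring
  have id3 : pm * pm * P^(N-1) = P ^ (s+N+N) * P ^ (M+M-1-s-N) := by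
    rw [hpmdef, ← Real.rpow_add hP0, ← Real.rpow_add hP0, ← Real.rpow_add hP0]
    ring_nf
  -- comparisons
  have hpq_pn : pq ≤ pn := Real.rpow_le_rpow (by linarith) hQP hN0.le
  have hpr_ps : pr ≤ ps :=
    Real.rpow_le_rpow (by linarith) (by simp only [hPdef]; linarith) (by linarith)
  have hexp1 : P ^ (s+N+N) ≤ pm * pm * P^(N-1) := by
    rw [id3]
    exact le_mul_of_one_le_right (Real.rpow_pos_of_pos hP0 _).le
      (ep_one_le_rpow hP1.le (by linarith))
  have hPN1 : P ^ (N-1) ≤ m₂ ^ (N-1) := ep_rpow_base_anti hm₂1.le hPm₂ (by linarith)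
  have hps_pm2 : ps * P ≤ pm * pm := by
    have h1 : ps * P = P ^ (s+1) := by
      have h := Real.rpow_add hP0 s 1
      rw [Real.rpow_one] at h
      rw [hpsdef, h]
    have h2 : pm * pm = P ^ (M+M) := by rw [hpmdef, ← Real.rpow_add hP0]
    rw [h1, h2]
    exact Real.rpow_le_rpow_of_exponent_le hP1.le (by linarith)
  have hps_le : ps ≤ pm * pm := by
    have h := le_mul_of_one_le_right hps0.le hP1.le
    linarith [hps_pm2]
  clear_value pm pm1 pq pq1 pr ps pn
  have hρv0 : 0 < ρv := by
    by_contra h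
    push_neg at h
    have h1 : ρv * (m₁ * pm) ≤ 0 := mul_nonpos_of_nonpos_of_nonneg h (by positivity)
    have h2 : 0 < n₁ * pq := by positivity
    linarith
  -- abbreviations
  set X := ρv * (m₁ * pm) with hXdef
  set r := n₁ * pq with hrdef
  set a := m₁^2 * pm^2 - 2*pr with hadef
  set b := 1 + M*m₁*pm1 with hbdef
  set c := 1 - n₁^2*pq^2/2 + N*n₁*pq1 with hcdef
  clear_value X r a b c
  have hXr : r ≤ X := hρv
  have hr0 : 0 < r := hrdef ▸ mul_pos hn₁ hpq0
  have ha0 : 0 < a := by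
    have h1 : 2*(pm*pm) < m₁^2*(pm*pm) := by
      have := mul_lt_mul_of_pos_right hm₁2 (mul_pos hpm0 hpm0)
      linarith
    rw [hadef]; linarith [h1, hpr_ps, hps_le]
  -- vertex condition facts
  have w1 : n₁ ≤ pm := by
    have h1 : m₂ ≤ pm := by
      calc m₂ = m₂ ^ (1:ℝ) := (Real.rpow_one m₂).symm
      _ ≤ m₂ ^ M := Real.rpow_le_rpow_of_exponent_le hm₂1.le hM1.le
      _ ≤ pm := by rw [hpmdef]; exact Real.rpow_le_rpow (by linarith) hPm₂ (by linarith)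
    have h2 : n₁*1 ≤ n₁*M := mul_le_mul_of_nonneg_left hM1.le hn₁.le
    linarith
  have w2 : M*n₁*pm1 ≤ pm := by
    have h1 : pm1 * m₂ ≤ pm := by
      have := mul_le_mul_of_nonneg_left hPm₂ hpm10.le
      linarith [id1]
    have h2 : M*n₁*pm1 ≤ m₂*pm1 := mul_le_mul_of_nonneg_right hm₂Mn₁.le hpm10.le
    linarith [h1, h2, mul_comm pm1 m₂]
  have w3 : n₁ * ps ≤ pm * pm := by
    have h1 : n₁ ≤ P := by
      have h2 : n₁*1 ≤ n₁*M := mul_le_mul_of_nonneg_left hM1.le hn₁.le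
      linarith [hm₂Mn₁, hPm₂]
    have h2 : n₁ * ps ≤ P * ps := mul_le_mul_of_nonneg_right h1 hps0.le
    have h3 : P * ps = ps * P := mul_comm _ _
    linarith [hps_pm2]
  -- C2 : vertex condition  b * (m₁ pm) ≤ a * r
  have C2 : b * (m₁ * pm) ≤ a * r := by
    have k1 : n₁ * (m₁ * pm) ≤ pm * (m₁ * pm) :=
      mul_le_mul_of_nonneg_right w1 (by positivity)
    have k2 : (M*n₁*pm1) * (m₁ * m₁ * pm) ≤ pm * (m₁ * m₁ * pm) :=
      mul_le_mul_of_nonneg_right w2 (by positivity)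
    have k3 : (2*n₁) * (n₁ * ps) ≤ (2*n₁) * (pm * pm) :=
      mul_le_mul_of_nonneg_left w3 (by positivity)
    have k4 : (m₁ + m₁^2 + 2*n₁) * pm^2 ≤ (n₁^2*m₁^2) * pm^2 :=
      mul_le_mul_of_nonneg_right hnum (sq_nonneg pm)
    have key : n₁ * (b * (m₁*pm)) ≤ n₁ * ((m₁^2*pm^2 - 2*ps) * n₁) := by
      rw [hbdef]; linarith [k1, k2, k3, k4]
    have h2 : b * (m₁*pm) ≤ (m₁^2*pm^2 - 2*ps) * n₁ := le_of_mul_le_mul_left (by linarith) hn₁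
    have hA2 : 0 ≤ m₁^2*pm^2 - 2*ps := by
      have h1 : 2*(pm*pm) ≤ m₁^2*(pm*pm) :=
        mul_le_mul_of_nonneg_right (le_of_lt hm₁2) (mul_pos hpm0 hpm0).le
      linarith [hps_le]
    have h3 : (m₁^2*pm^2 - 2*ps) * n₁ ≤ (m₁^2*pm^2 - 2*pr) * n₁ :=
      mul_le_mul_of_nonneg_right (by linarith) hn₁.le
    have h4 : (m₁^2*pm^2 - 2*pr) * n₁ ≤ ((m₁^2*pm^2 - 2*pr) * n₁) * pq :=
      le_mul_of_one_le_right (mul_nonneg (by linarith [hA2, hpr_ps]) hn₁.le) hpq1'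
    rw [hadef, hrdef]
    have h5 : ((m₁^2*pm^2 - 2*pr) * n₁) * pq = (m₁^2*pm^2 - 2*pr) * (n₁ * pq) := by ring
    linarith [h2, h3, h4]
  -- C1 : positivity of the boundary quadratic at r
  have t1le : pr * pq^2 ≤ pm^2 * P^(N-1) := by
    have h1 : pr * pq^2 ≤ ps * pn^2 :=
      mul_le_mul hpr_ps (pow_le_pow_left₀ hpq0.le hpq_pn 2) (by positivity) hps0.le
    have h2 : ps * pn^2 ≤ pm * pm * P^(N-1) := by
      have h3 := hexp1
      rw [← id2] at h3
      have h4 : ps * pn^2 = ps * (pn * pn) := by ring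
      linarith
    have h5 : pm * pm * P^(N-1) = pm^2 * P^(N-1) := by ring
    linarith [h1, h2]
  have t2le : pm * pq ≤ pm^2 * P^(N-1) := by
    have h1 : pm * pn = P ^ (M+N) := by rw [hpmdef, hpndef, ← Real.rpow_add hP0]
    have h2 : P ^ (M+N) ≤ P ^ (M+M-1+N) := Real.rpow_le_rpow_of_exponent_le hP1.le (by linarith)
    have hpm2 : pm^2 = P^(M+M) := by rw [sq, hpmdef, ← Real.rpow_add hP0]
    have h3 : P ^ (M+M-1+N) = pm^2 * P^(N-1) := by
      rw [hpm2, ← Real.rpow_add hP0]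
      congr 1
      ring
    have h4 : pm * pq ≤ pm * pn := mul_le_mul_of_nonneg_left hpq_pn hpm0.le
    rw [← h3]
    calc pm * pq ≤ pm * pn := h4
    _ = P ^ (M+N) := h1
    _ ≤ P ^ (M+M-1+N) := h2
  have t3le : pm1 * pm * pq ≤ pm^2 * P^(N-1) := by
    have h1 : pm1 * pm * pn = P ^ (M-1+M+N) := by
      rw [hpm1def, hpmdef, hpndef, ← Real.rpow_add hP0, ← Real.rpow_add hP0]
    have h2 : P ^ (M-1+M+N) = P ^ (M+M-1+N) := by ring_nf
    have hpm2 : pm^2 = P^(M+M) := by rw [sq, hpmdef, ← Real.rpow_add hP0]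
    have h3 : P ^ (M+M-1+N) = pm^2 * P^(N-1) := by
      rw [hpm2, ← Real.rpow_add hP0]
      congr 1
      ring
    have h4 : pm1 * pm * pq ≤ pm1 * pm * pn :=
      mul_le_mul_of_nonneg_left hpq_pn (by positivity)
    rw [← h3, ← h2]
    calc pm1 * pm * pq ≤ pm1 * pm * pn := h4
    _ = P ^ (M-1+M+N) := h1
  have C1 : 0 < a * r^2/2 - b * (m₁*pm) * r + c * (m₁*pm)^2 := by
    have u1 : n₁^2 * (pr * pq^2) ≤ n₁^2 * (pm^2 * P^(N-1)) :=
      mul_le_mul_of_nonneg_left t1le (sq_nonneg n₁)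
    have u2 : (m₁*n₁) * (pm * pq) ≤ (m₁*n₁) * (pm^2 * P^(N-1)) :=
      mul_le_mul_of_nonneg_left t2le (by positivity)
    have u3 : (M*m₁^2*n₁) * (pm1 * pm * pq) ≤ (M*m₁^2*n₁) * (pm^2 * P^(N-1)) :=
      mul_le_mul_of_nonneg_left t3le (by positivity)
    have u4 : (n₁^2 + m₁*n₁ + M*m₁^2*n₁) * P^(N-1) ≤ (n₁^2 + m₁*n₁ + M*m₁^2*n₁) * m₂^(N-1) :=
      mul_le_mul_of_nonneg_left hPN1 (by positivity)
    have u5 : ((n₁^2 + m₁*n₁ + M*m₁^2*n₁) * m₂^(N-1)) * pm^2 < m₁^2 * pm^2 :=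
      mul_lt_mul_of_pos_right hκ (by positivity)
    have u7 : ((n₁^2 + m₁*n₁ + M*m₁^2*n₁) * P^(N-1)) * pm^2 < m₁^2 * pm^2 :=
      lt_of_le_of_lt (mul_le_mul_of_nonneg_right u4 (sq_nonneg pm)) u5
    have u6 : (0:ℝ) ≤ N*n₁*pq1 * (m₁*pm)^2 := by positivity
    rw [hadef, hbdef, hcdef, hrdef]
    linarith [u1, u2, u3, u7, u6]
  -- convexity : positivity at X ≥ r
  have Gpoly : 0 < a * X^2/2 - b * (m₁*pm) * X + c * (m₁*pm)^2 := by
    have h1 : 0 ≤ (X - r) * (a*r - b*(m₁*pm)) :=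
      mul_nonneg (by linarith) (by linarith)
    have h2 : 0 ≤ a * (X - r)^2 := mul_nonneg ha0.le (sq_nonneg _)
    have iden : a*X^2/2 - b*(m₁*pm)*X + c*(m₁*pm)^2
        = (a*r^2/2 - b*(m₁*pm)*r + c*(m₁*pm)^2)
          + ((X-r)*(a*r - b*(m₁*pm)) + a*(X-r)^2/2) := by ring
    linarith [C1, h1, h2, iden]
  have key : 0 < a * ρv^2/2 - b * ρv + c := by
    by_contra h
    push_neg at h
    have heq : a * X^2/2 - b * (m₁*pm) * X + c * (m₁*pm)^2
        = (a * ρv^2/2 - b * ρv + c) * (m₁*pm)^2 := by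
      rw [hXdef]; ring
    have h2 : (a * ρv^2/2 - b * ρv + c) * (m₁*pm)^2 ≤ 0 :=
      mul_nonpos_of_nonpos_of_nonneg h (sq_nonneg _)
    linarith [Gpoly, heq ▸ h2]
  have hfin : 0 ≤ (Av + pr) * ρv^2 := mul_nonneg (by linarith) (sq_nonneg _)
  rw [hadef, hbdef, hcdef] at key
  rw [hbdef, hrdef]
  have iden2 : (m₁*pm)^2*ρv^2/2 + Av*ρv^2 - (1 + M*m₁*pm1)*ρv + 1 - (n₁*pq)^2/2 + N*n₁*pq1
      = ((m₁^2*pm^2 - 2*pr)*ρv^2/2 - (1 + M*m₁*pm1)*ρv + (1 - n₁^2*pq^2/2 + N*n₁*pq1))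
        + (Av + pr)*ρv^2 := by ring
  linarith [key, hfin, iden2]
lemma ep_no_touch {f : ℝ → ℝ} {c t : ℝ} (h : HasDerivAt f c t) (hc : 0 < c)
    (ht : 0 < t) (hb : ∀ y, 0 < y → y < t → f t < f y) : False := by
  have hs := hasDerivAt_iff_tendsto_slope.1 h
  have hlt : 𝓝[<] t ≤ 𝓝[≠] t := nhdsWithin_mono _ (fun y hy => ne_of_lt hy)
  have hs' : Tendsto (slope f t) (𝓝[<] t) (𝓝 c) := hs.mono_left hlt
  have hev : ∀ᶠ y in 𝓝[<] t, 0 < slope f t y := hs' (Ioi_mem_nhds hc)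
  have hev2 : ∀ᶠ y in 𝓝[<] t, 0 < y := by
    refine eventually_nhdsWithin_of_eventually_nhds ?_
    exact eventually_nhds_iff.2 ⟨Ioi 0, fun y hy => hy, isOpen_Ioi, ht⟩
  have hev3 : ∀ᶠ y in 𝓝[<] t, y < t := eventually_mem_nhdsWithin.mono (fun y hy => hy)
  rcases (hev.and (hev2.and hev3)).exists with ⟨y, h1, h2, h3⟩
  rw [slope_def_field] at h1
  have h4 : f t < f y := hb y h2 h3
  have h5 : (f y - f t) / (y - t) ≤ 0 :=
    div_nonpos_of_nonneg_of_nonpos (by linarith) (by linarith)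
  linarith
lemma ep_zoneA (s N M m₁ n₁ n₂ m₂ : ℝ)
    (hm₁ : 0 < m₁) (hn₁ : 0 < n₁) (hs : 1 ≤ s) (hN0 : 0 < N) (hN1 : N < 1)
    (hM : M > N + s) (hn₂ : 1 < n₂) (hm₂n₂ : n₂ < m₂)
    (hX : (n₁/m₁*m₂^(N+s-M))^2 + n₁/m₁*m₂^(N+s-M) < 1)
    (t ρv : ℝ) (ht : 0 ≤ t) (hρ0 : 0 ≤ ρv)
    (hρ : ρv * (m₁*(t+m₂)^M) ≤ n₁*(t+n₂)^N) :
    (t+1)^s * ρv^2 + ρv < 1 := by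
  set P := t + m₂ with hPdef
  have hm₂1 : 1 < m₂ := lt_trans hn₂ hm₂n₂
  have hP0 : 0 < P := by simp only [hPdef]; linarith
  have hPm₂ : m₂ ≤ P := by simp only [hPdef]; linarith
  have hP1 : 1 < P := lt_of_lt_of_le hm₂1 hPm₂
  have hmP : 0 < m₁ * P ^ M := mul_pos hm₁ (Real.rpow_pos_of_pos hP0 M)
  -- ρv ≤ n₁/m₁ * P^(N-M)
  have h1 : n₁ * (t+n₂) ^ N ≤ n₁ * P ^ N := by
    have := Real.rpow_le_rpow (by linarith : (0:ℝ) ≤ t + n₂)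
      (by simp only [hPdef]; linarith : t + n₂ ≤ P) hN0.le
    nlinarith
  have h2 : ρv ≤ n₁/m₁ * P ^ (N-M) := by
    rw [Real.rpow_sub hP0]
    rw [div_mul_div_comm]
    refine (le_div_iff₀ hmP).2 ?_
    calc ρv * (m₁ * P ^ M) ≤ n₁ * (t+n₂) ^ N := hρ
    _ ≤ n₁ * P ^ N := h1
  -- abbreviations
  set x := n₁/m₁*m₂^(N+s-M) with hxdef
  have hx0 : 0 < x := mul_pos (div_pos hn₁ hm₁) (Real.rpow_pos_of_pos (by linarith) _)
  -- ρv ≤ x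
  have h3 : P ^ (N-M) ≤ m₂ ^ (N-M) := ep_rpow_base_anti hm₂1.le hPm₂ (by linarith)
  have h4 : m₂ ^ (N-M) = m₂ ^ (N+s-M) * m₂ ^ (-s) := by
    rw [← Real.rpow_add (by linarith)]; ring_nf
  have h5 : m₂ ^ (-s) ≤ 1 := Real.rpow_le_one_of_one_le_of_nonpos hm₂1.le (by linarith)
  have h6 : ρv ≤ x := by
    have hpos : (0:ℝ) < m₂ ^ (N+s-M) := Real.rpow_pos_of_pos (by linarith) _
    calc ρv ≤ n₁/m₁ * P ^ (N-M) := h2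
    _ ≤ n₁/m₁ * m₂ ^ (N-M) := mul_le_mul_of_nonneg_left h3 (div_pos hn₁ hm₁).le
    _ = x * m₂ ^ (-s) := by rw [h4, hxdef]; ring
    _ ≤ x := mul_le_of_le_one_right hx0.le h5
  -- (t+1)^s * ρv^2 ≤ x^2
  have h7 : (t+1) ^ s ≤ P ^ s := Real.rpow_le_rpow (by linarith) (by simp only [hPdef]; linarith) (by linarith)
  have h8 : (t+1) ^ s * ρv ^ 2 ≤ P ^ s * (n₁/m₁ * P ^ (N-M)) ^ 2 := by
    exact mul_le_mul h7 (pow_le_pow_left₀ hρ0 h2 2) (sq_nonneg _)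
      (Real.rpow_nonneg (by positivity) _)
  have h9 : P ^ s * (n₁/m₁ * P ^ (N-M)) ^ 2 = (n₁/m₁)^2 * P ^ (s + (N-M) + (N-M)) := by
    rw [Real.rpow_add hP0, Real.rpow_add hP0]; ring
  have h10 : P ^ (s + (N-M) + (N-M)) ≤ m₂ ^ (s + (N-M) + (N-M)) :=
    ep_rpow_base_anti hm₂1.le hPm₂ (by linarith)
  have h11 : m₂ ^ (s + (N-M) + (N-M)) = (m₂ ^ (N+s-M))^2 * m₂ ^ (-s) := by
    rw [show s + (N-M) + (N-M) = (N+s-M) + ((N+s-M) + (-s)) by ring,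
      Real.rpow_add (by linarith : (0:ℝ) < m₂), Real.rpow_add (by linarith : (0:ℝ) < m₂)]
    ring
  have h12 : (t+1) ^ s * ρv ^ 2 ≤ x ^ 2 := by
    have hpos : (0:ℝ) < m₂ ^ (N+s-M) := Real.rpow_pos_of_pos (by linarith) _
    calc (t+1) ^ s * ρv ^ 2 ≤ (n₁/m₁)^2 * P ^ (s + (N-M) + (N-M)) := by rw [← h9]; exact h8
    _ ≤ (n₁/m₁)^2 * ((m₂ ^ (N+s-M))^2 * m₂ ^ (-s)) := by
        rw [← h11]; exact mul_le_mul_of_nonneg_left h10 (sq_nonneg _)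
    _ ≤ (n₁/m₁)^2 * (m₂ ^ (N+s-M))^2 :=
        mul_le_mul_of_nonneg_left (mul_le_of_le_one_right (sq_nonneg _) h5) (sq_nonneg _)
    _ = x ^ 2 := by rw [hxdef]; ring
  nlinarith

/-- Global a priori bounds on the characteristic system of the 2D attractive
Euler--Poisson flow under the polynomial lower-bound assumption
`A(t) ≥ -(t+1)^s`. -/
theorem euler_poisson_global_bounds_poly
    (s m₁ m₂ n₁ n₂ M N : ℝ)
    (hs : 1 ≤ s)
    (hN0 : 0 < N) (hN1 : N < 1)
    (hM : M > N + s)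
    (hn₁ : n₁ > 1 + Real.sqrt 3)
    (hn₂ : n₂ > 1)
    (hm₁ : m₁ > Real.sqrt 2)
    (hm₂ : m₂ > max (max n₂ (((m₁ * n₁ + M * m₁ ^ 2 * n₁ + n₁ ^ 2) / m₁ ^ 2) ^ (1 / (1 - N))))
        ((n₁ / (2 * m₁) * (1 + Real.sqrt 5)) ^ (1 / (M - N - s))))
    (K : ℝ) (hK : 0 < K)
    (T : EReal) (hT : 0 < T)
    (A d ρ : ℝ → ℝ)
    (hAcont : ContinuousOn A {t : ℝ | 0 ≤ t ∧ (t : EReal) < T})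
    (hAlb : ∀ t : ℝ, 0 ≤ t → (t : EReal) < T → -(t + 1) ^ s ≤ A t)
    (hAub : ∀ t : ℝ, 0 ≤ t → (t : EReal) < T → A t ≤ K)
    (hd : ∀ t : ℝ, 0 ≤ t → (t : EReal) < T →
      HasDerivAt d (-(d t) ^ 2 / 2 + A t * (ρ t) ^ 2 - ρ t + 1) t)
    (hρ : ∀ t : ℝ, 0 ≤ t → (t : EReal) < T →
      HasDerivAt ρ (-(ρ t) * d t) t)
    (hρ0 : 0 < ρ 0) (hd0 : 0 < d 0)
    (hthr : d 0 > m₁ * m₂ ^ M * ρ 0 - n₁ * n₂ ^ N) :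
    ∃ C : ℝ, 0 < C ∧ ∀ t : ℝ, 0 ≤ t → (t : EReal) < T →
      (0 < ρ t ∧ ρ t ≤ C) ∧ (0 < d t ∧ d t ≤ C) := by
  ------------------------------------------------------------------ constants
  have hm₁0 : 0 < m₁ := lt_trans (by positivity) hm₁
  have hm₁2 : 2 < m₁^2 := by
    nlinarith [Real.sq_sqrt (by norm_num : (2:ℝ) ≥ 0), Real.sqrt_nonneg 2]
  have h141 : (1.41:ℝ) < m₁ := by
    have : (1.41:ℝ) < Real.sqrt 2 := by
      rw [show (1.41:ℝ) = Real.sqrt (1.41^2) by rw [Real.sqrt_sq]; norm_num]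
      exact Real.sqrt_lt_sqrt (by norm_num) (by norm_num)
    linarith
  have hsqrt3 : (1.7:ℝ) < Real.sqrt 3 := by
    rw [show (1.7:ℝ) = Real.sqrt (1.7^2) by rw [Real.sqrt_sq]; norm_num]
    exact Real.sqrt_lt_sqrt (by norm_num) (by norm_num)
  have hn₁27 : (2.7:ℝ) < n₁ := by linarith
  have hn₁0 : 0 < n₁ := by linarith
  have hM1 : 1 < M := by linarith
  have hm₂n₂ : n₂ < m₂ := lt_of_le_of_lt (le_trans (le_max_left _ _) (le_max_left _ _)) hm₂
  have hm₂1 : 1 < m₂ := lt_trans hn₂ hm₂n₂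
  have hB2 : ((m₁ * n₁ + M * m₁ ^ 2 * n₁ + n₁ ^ 2) / m₁ ^ 2) ^ (1 / (1 - N)) < m₂ :=
    lt_of_le_of_lt (le_trans (le_max_right _ _) (le_max_left _ _)) hm₂
  have hB3 : (n₁ / (2 * m₁) * (1 + Real.sqrt 5)) ^ (1 / (M - N - s)) < m₂ :=
    lt_of_le_of_lt (le_max_right _ _) hm₂
  have hnum : m₁ + m₁^2 + 2*n₁ ≤ n₁^2*m₁^2 := by
    have e1 : m₁ < 0.72*m₁^2 := by nlinarith [mul_lt_mul_of_pos_left h141 hm₁0]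
    have A1 : 0 ≤ (n₁ - 2.7)*(m₁^2 - 2) := mul_nonneg (by linarith) (by linarith)
    have E1 : 0 ≤ (n₁^2 - 2.7*n₁)*m₁^2 := mul_nonneg (by nlinarith) (by positivity)
    nlinarith [e1, A1, E1]
  have hb0Mn₁ : M * n₁ ≤ (m₁ * n₁ + M * m₁ ^ 2 * n₁ + n₁ ^ 2) / m₁ ^ 2 := by
    rw [le_div_iff₀ (by positivity)]
    nlinarith [mul_pos hm₁0 hn₁0, sq_nonneg n₁]
  have hMn₁1 : 1 < M * n₁ := by nlinarith
  have hexpo1 : 1 ≤ 1 / (1 - N) := by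
    rw [le_div_iff₀ (by linarith)]; linarith
  have hMn₁m₂ : M * n₁ < m₂ := by
    have h2' : M*n₁ ≤ (M*n₁) ^ (1/(1-N)) := by
      calc M*n₁ = (M*n₁)^(1:ℝ) := (Real.rpow_one _).symm
      _ ≤ (M*n₁) ^ (1/(1-N)) := Real.rpow_le_rpow_of_exponent_le hMn₁1.le hexpo1
    have h3 : (M*n₁) ^ (1/(1-N)) ≤ ((m₁ * n₁ + M * m₁ ^ 2 * n₁ + n₁ ^ 2) / m₁ ^ 2) ^ (1/(1-N)) :=
      Real.rpow_le_rpow (by positivity) hb0Mn₁ (by positivity)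
    linarith [hB2, h2'.trans h3]
  have hκ : (n₁^2 + m₁*n₁ + M*m₁^2*n₁) * m₂^(N-1) < m₁^2 := by
    have h1 : (m₁ * n₁ + M * m₁ ^ 2 * n₁ + n₁ ^ 2) / m₁ ^ 2 < m₂ ^ (1-N) := by
      have h2 : ((((m₁ * n₁ + M * m₁ ^ 2 * n₁ + n₁ ^ 2) / m₁ ^ 2)) ^ (1/(1-N))) ^ (1-N)
          < m₂ ^ (1-N) :=
        Real.rpow_lt_rpow (Real.rpow_nonneg (by positivity) _) hB2 (by linarith)
      rwa [← Real.rpow_mul (by positivity), one_div,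
        inv_mul_cancel₀ (by linarith : (1:ℝ)-N ≠ 0), Real.rpow_one] at h2
    have hpw : (0:ℝ) < m₂^(1-N) := Real.rpow_pos_of_pos (by linarith) _
    have h5 : ((m₁ * n₁ + M * m₁ ^ 2 * n₁ + n₁ ^ 2) / m₁ ^ 2)*m₁^2 < m₂^(1-N)*m₁^2 :=
      mul_lt_mul_of_pos_right h1 (by positivity)
    have h6 : ((m₁ * n₁ + M * m₁ ^ 2 * n₁ + n₁ ^ 2) / m₁ ^ 2)*m₁^2
        = n₁^2+m₁*n₁+M*m₁^2*n₁ := by field_simp; ring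
    rw [show N-1 = -(1-N) by ring, Real.rpow_neg (by linarith : (0:ℝ) ≤ m₂),
      ← div_eq_mul_inv, div_lt_iff₀ hpw]
    linarith
  have hw5 : Real.sqrt 5 ^ 2 = 5 := Real.sq_sqrt (by norm_num)
  have hw0 : (2.2:ℝ) < Real.sqrt 5 := by
    rw [show (2.2:ℝ) = Real.sqrt (2.2^2) by rw [Real.sqrt_sq]; norm_num]
    exact Real.sqrt_lt_sqrt (by norm_num) (by norm_num)
  have he0 : 0 < M - N - s := by linarith
  have hb10 : 0 < n₁ / (2 * m₁) * (1 + Real.sqrt 5) := by positivity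
  have hC1 : n₁ / (2 * m₁) * (1 + Real.sqrt 5) < m₂ ^ (M-N-s) := by
    have h2 : ((n₁ / (2 * m₁) * (1 + Real.sqrt 5)) ^ (1/(M-N-s))) ^ (M-N-s) < m₂ ^ (M-N-s) :=
      Real.rpow_lt_rpow (Real.rpow_nonneg hb10.le _) hB3 he0
    rwa [← Real.rpow_mul hb10.le, one_div, inv_mul_cancel₀ (ne_of_gt he0), Real.rpow_one] at h2
  have hx0 : 0 < n₁/m₁*m₂^(N+s-M) := by positivity
  have hxφ : (n₁/m₁*m₂^(N+s-M)) * (1 + Real.sqrt 5) < 2 := by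
    have hinv : (m₂ ^ (M-N-s))⁻¹ < (n₁ / (2 * m₁) * (1 + Real.sqrt 5))⁻¹ :=
      inv_strictAnti₀ hb10 hC1
    have hxeq : n₁/m₁*m₂^(N+s-M) = n₁/m₁ * (m₂ ^ (M-N-s))⁻¹ := by
      rw [show N+s-M = -(M-N-s) by ring, Real.rpow_neg (by linarith : (0:ℝ) ≤ m₂)]
    have h3 : n₁/m₁*m₂^(N+s-M) < n₁/m₁ * (n₁ / (2 * m₁) * (1 + Real.sqrt 5))⁻¹ := by
      rw [hxeq]
      exact mul_lt_mul_of_pos_left hinv (by positivity)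
    have h4 : n₁/m₁ * (n₁ / (2 * m₁) * (1 + Real.sqrt 5))⁻¹ = 2 / (1 + Real.sqrt 5) := by
      field_simp
    rw [h4] at h3
    calc (n₁/m₁*m₂^(N+s-M)) * (1 + Real.sqrt 5)
        < 2 / (1 + Real.sqrt 5) * (1 + Real.sqrt 5) :=
          mul_lt_mul_of_pos_right h3 (by positivity)
    _ = 2 := by field_simp
  have hX : (n₁/m₁*m₂^(N+s-M))^2 + n₁/m₁*m₂^(N+s-M) < 1 := by
    have h_a : 0 < Real.sqrt 5 - 1 - 2*(n₁/m₁*m₂^(N+s-M)) := by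
      have h5 := mul_lt_mul_of_pos_right hxφ
        (show (0:ℝ) < (Real.sqrt 5 - 1)/2 by linarith)
      nlinarith [h5]
    have h_b : 0 < 2*(n₁/m₁*m₂^(N+s-M)) + Real.sqrt 5 + 1 := by linarith
    nlinarith [mul_pos h_a h_b]
  ------------------------------------------------------------------ tools
  have hcoe : ∀ {a b : ℝ}, a ≤ b → (b:EReal) < T → (a:EReal) < T := by
    intro a b hab hb
    exact lt_of_le_of_lt (EReal.coe_le_coe_iff.2 hab) hb
  ------------------------------------------------------------------ ρ never vanishes
  have hρne : ∀ t : ℝ, 0 ≤ t → (t:EReal) < T → ρ t ≠ 0 := by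
    intro t₁ h1 h2
    have hsub : ∀ y ∈ Set.Icc (0:ℝ) t₁, 0 ≤ y ∧ (y:EReal) < T :=
      fun y hy => ⟨hy.1, hcoe hy.2 h2⟩
    have hdcont : ContinuousOn d (Set.Icc 0 t₁) := fun y hy =>
      ((hd y (hsub y hy).1 (hsub y hy).2).continuousAt).continuousWithinAt
    obtain ⟨L, hL⟩ := isCompact_Icc.exists_bound_of_continuousOn hdcont
    have hdL : ∀ y ∈ Set.Icc (0:ℝ) t₁, d y ≤ L := by
      intro y hy
      have := hL y hy
      rw [Real.norm_eq_abs] at this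
      linarith [abs_le.1 this]
    have hF : ∀ y ∈ Set.Icc (0:ℝ) t₁, HasDerivAt (fun y => ρ y^2 * Real.exp (2*L*y))
        (2*(ρ y)^2*(L - d y)*Real.exp (2*L*y)) y := by
      intro y hy
      have h1' := (hρ y (hsub y hy).1 (hsub y hy).2).pow 2
      have h2' : HasDerivAt (fun y : ℝ => Real.exp (2*L*y)) (Real.exp (2*L*y)*(2*L)) y := by
        have h := ((hasDerivAt_id y).const_mul (2*L)).exp
        simpa using h
      have h3' := h1'.mul h2'
      refine h3'.congr_deriv ?_
      push_cast [Pi.pow_apply]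
      ring
    have hmono : MonotoneOn (fun y => ρ y^2 * Real.exp (2*L*y)) (Set.Icc 0 t₁) := by
      apply monotoneOn_of_deriv_nonneg (convex_Icc 0 t₁)
      · exact fun y hy => ((hF y hy).continuousAt).continuousWithinAt
      · intro y hy
        rw [interior_Icc] at hy
        exact ((hF y (Set.mem_Icc_of_Ioo hy)).differentiableAt).differentiableWithinAt
      · intro y hy
        rw [interior_Icc] at hy
        rw [(hF y (Set.mem_Icc_of_Ioo hy)).deriv]
        have h4 := hdL y (Set.mem_Icc_of_Ioo hy)
        have h5 : (0:ℝ) ≤ 2*(ρ y)^2*(L - d y) := mul_nonneg (by positivity) (by linarith)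
        exact mul_nonneg h5 (Real.exp_nonneg _)
    have hF0 : (fun y => ρ y^2 * Real.exp (2*L*y)) 0 ≤ (fun y => ρ y^2 * Real.exp (2*L*y)) t₁ :=
      hmono ⟨le_refl 0, h1⟩ ⟨h1, le_refl t₁⟩ h1
    intro heq
    have hF0' : ρ 0^2 * Real.exp (2*L*0) ≤ ρ t₁^2 * Real.exp (2*L*t₁) := hF0
    rw [heq] at hF0'
    have hpos : (0:ℝ) < ρ 0^2 * Real.exp (2*L*0) := by positivity
    nlinarith [hF0', hpos, Real.exp_pos (2*L*t₁)]
  have hρpos : ∀ t : ℝ, 0 ≤ t → (t:EReal) < T → 0 < ρ t := by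
    intro t₁ h1 h2
    rcases lt_or_ge 0 (ρ t₁) with h | h
    · exact h
    · exfalso
      have hne := hρne t₁ h1 h2
      have hlt : ρ t₁ < 0 := lt_of_le_of_ne h hne
      have hcont : ContinuousOn ρ (Set.Icc 0 t₁) := fun y hy =>
        ((hρ y hy.1 (hcoe hy.2 h2)).continuousAt).continuousWithinAt
      have h0mem : (0:ℝ) ∈ Set.Icc (ρ t₁) (ρ 0) := ⟨hlt.le, hρ0.le⟩
      obtain ⟨τ, hτ, hτ0⟩ := intermediate_value_Icc' h1 hcont h0mem
      exact hρne τ hτ.1 (hcoe hτ.2 h2) hτ0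
  ------------------------------------------------------------------ the barrier function
  set EE : ℝ → ℝ := fun y => d y - m₁*(y+m₂)^M * ρ y + n₁*(y+n₂)^N with hEEdef
  have hEEd : ∀ t : ℝ, 0 ≤ t → (t:EReal) < T → HasDerivAt EE
      ((-(d t)^2/2 + A t*(ρ t)^2 - ρ t + 1)
        - (m₁*(M*(t+m₂)^(M-1))*(ρ t) + (m₁*(t+m₂)^M)*(-(ρ t)*d t))
        + n₁*(N*(t+n₂)^(N-1))) t := by
    intro t h1 h2
    have hb1 : HasDerivAt (fun y : ℝ => y + m₂) 1 t := (hasDerivAt_id t).add_const m₂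
    have hb2 : HasDerivAt (fun y : ℝ => y + n₂) 1 t := (hasDerivAt_id t).add_const n₂
    have hp1 : HasDerivAt (fun y : ℝ => (y+m₂)^M) (M*(t+m₂)^(M-1)) t := by
      have h := Real.hasDerivAt_rpow_const (x := t+m₂) (p := M)
        (Or.inl (by positivity))
      have h3 := HasDerivAt.comp t h hb1
      exact h3.congr_deriv (by ring)
    have hp2 : HasDerivAt (fun y : ℝ => (y+n₂)^N) (N*(t+n₂)^(N-1)) t := by
      have h := Real.hasDerivAt_rpow_const (x := t+n₂) (p := N)
        (Or.inl (by positivity))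
      have h3 := HasDerivAt.comp t h hb2
      exact h3.congr_deriv (by ring)
    have hmul : HasDerivAt (fun y => (m₁*(y+m₂)^M) * ρ y)
        (m₁*(M*(t+m₂)^(M-1))*(ρ t) + (m₁*(t+m₂)^M)*(-(ρ t)*d t)) t :=
      (hp1.const_mul m₁).mul (hρ t h1 h2)
    have hfin := ((hd t h1 h2).sub hmul).add (hp2.const_mul n₁)
    rw [hEEdef]
    exact hfin
  have hE0 : 0 < EE 0 := by
    rw [hEEdef]
    simp only [zero_add]
    linarith [hthr]
  ------------------------------------------------------------------ invariance
  have hkey : ∀ t : ℝ, 0 ≤ t → (t:EReal) < T → 0 < d t ∧ 0 < EE t := by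
    intro t₁ ht₁ hT₁
    by_contra hcon
    have hmemsub : ∀ y, y ∈ Set.Icc (0:ℝ) t₁ → 0 ≤ y ∧ (y:EReal) < T :=
      fun y hy => ⟨hy.1, hcoe hy.2 hT₁⟩
    have hWcont : ContinuousOn (fun y => min (d y) (EE y)) (Set.Icc 0 t₁) := by
      intro y hy
      obtain ⟨hy0, hyT⟩ := hmemsub y hy
      exact ContinuousAt.continuousWithinAt
        (((hd y hy0 hyT).continuousAt).min ((hEEd y hy0 hyT).continuousAt))
    set Z := Set.Icc (0:ℝ) t₁ ∩ (fun y => min (d y) (EE y)) ⁻¹' (Set.Iic 0) with hZdef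
    have hZne : Z.Nonempty := by
      refine ⟨t₁, ⟨⟨ht₁, le_refl _⟩, ?_⟩⟩
      simp only [Set.mem_preimage, Set.mem_Iic]
      by_contra hW
      push_neg at hW
      exact hcon ⟨lt_of_lt_of_le hW (min_le_left _ _), lt_of_lt_of_le hW (min_le_right _ _)⟩
    have hZclosed : IsClosed Z :=
      hWcont.preimage_isClosed_of_isClosed isClosed_Icc isClosed_Iic
    have hZbdd : BddBelow Z := ⟨0, fun y hy => hy.1.1⟩
    have htsZ : sInf Z ∈ Z := hZclosed.csInf_mem hZne hZbdd
    set ts := sInf Z with htsdef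
    have hts0 : 0 ≤ ts := htsZ.1.1
    have htst₁ : ts ≤ t₁ := htsZ.1.2
    have htsT : (ts:EReal) < T := hcoe htst₁ hT₁
    have hW0 : 0 < min (d 0) (EE 0) := lt_min hd0 hE0
    have htspos : 0 < ts := by
      rcases eq_or_lt_of_le hts0 with h | h
      · exfalso
        have := htsZ.2
        simp only [Set.mem_preimage, Set.mem_Iic, ← h] at this
        linarith
      · exact h
    have hbefore : ∀ y, 0 < y → y < ts → 0 < min (d y) (EE y) := by
      intro y hy0 hyts
      by_contra hWy
      push_neg at hWy
      have hyZ : y ∈ Z := ⟨⟨hy0.le, le_trans hyts.le htst₁⟩, hWy⟩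
      have := csInf_le hZbdd hyZ
      rw [← htsdef] at this
      linarith
    have hWts0 : 0 ≤ min (d ts) (EE ts) := by
      have hWc : ContinuousAt (fun y => min (d y) (EE y)) ts :=
        (hd ts hts0 htsT).continuousAt.min (hEEd ts hts0 htsT).continuousAt
      have htend : Filter.Tendsto (fun y => min (d y) (EE y)) (nhdsWithin ts (Set.Iio ts))
          (nhds (min (d ts) (EE ts))) := hWc.tendsto.mono_left nhdsWithin_le_nhds
      refine ge_of_tendsto htend ?_
      have hev2 : ∀ᶠ y in nhdsWithin ts (Set.Iio ts), 0 < y :=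
        eventually_nhdsWithin_of_eventually_nhds
          (eventually_nhds_iff.2 ⟨Set.Ioi 0, fun y hy => hy, isOpen_Ioi, htspos⟩)
      have hev3 : ∀ᶠ y in nhdsWithin ts (Set.Iio ts), y < ts :=
        eventually_mem_nhdsWithin.mono (fun y hy => hy)
      exact (hev2.and hev3).mono (fun y hy => (hbefore y hy.1 hy.2).le)
    have hdts : 0 ≤ d ts := le_trans hWts0 (min_le_left _ _)
    have hEts : 0 ≤ EE ts := le_trans hWts0 (min_le_right _ _)
    have hWtsle : min (d ts) (EE ts) ≤ 0 := htsZ.2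
    have hρts := hρpos ts hts0 htsT
    have hcases : d ts = 0 ∨ EE ts = 0 := by
      rcases le_total (d ts) (EE ts) with h | h
      · left
        have := min_eq_left h
        linarith [hWtsle, hdts, this ▸ hWtsle]
      · right
        have := min_eq_right h
        linarith [hWtsle, hEts, this ▸ hWtsle]
    rcases hcases with hdz | hEz
    · -- d-boundary
      have hρle : ρ ts * (m₁*(ts+m₂)^M) ≤ n₁*(ts+n₂)^N := by
        have h := hEts
        rw [hEEdef] at h
        simp only at h
        linarith [h, hdz]
      have hzA := ep_zoneA s N M m₁ n₁ n₂ m₂ hm₁0 hn₁0 hs hN0 hN1 hM hn₂ hm₂n₂ hX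
        ts (ρ ts) hts0 hρts.le hρle
      have h1 : -(ts+1)^s * (ρ ts)^2 ≤ A ts * (ρ ts)^2 :=
        mul_le_mul_of_nonneg_right (hAlb ts hts0 htsT) (sq_nonneg _)
      have hder : 0 < -(d ts)^2/2 + A ts*(ρ ts)^2 - ρ ts + 1 := by
        rw [hdz]
        linarith [hzA, h1]
      refine ep_no_touch (hd ts hts0 htsT) hder htspos ?_
      intro y hy0 hyts
      have hb := hbefore y hy0 hyts
      have := min_le_left (d y) (EE y)
      rw [hdz]
      linarith
    · -- E-boundary
      have hdeq : d ts = m₁*(ts+m₂)^M * ρ ts - n₁*(ts+n₂)^N := by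
        rw [hEEdef] at hEz
        simp only at hEz
        linarith
      have hρge : n₁*(ts+n₂)^N ≤ ρ ts * (m₁*(ts+m₂)^M) := by
        rw [hdeq] at hdts
        linarith [hdts]
      have hzB := ep_zoneB s N M m₁ n₁ n₂ m₂ hm₁0 hm₁2 hn₁0 hs hN0 hN1 hM hM1 hn₂
        hm₂n₂ hMn₁m₂ hκ hnum ts (ρ ts) (A ts) hts0 (hAlb ts hts0 htsT) hρge
      have hEder : 0 < (-(d ts)^2/2 + A ts*(ρ ts)^2 - ρ ts + 1)
          - (m₁*(M*(ts+m₂)^(M-1))*(ρ ts) + (m₁*(ts+m₂)^M)*(-(ρ ts)*d ts))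
          + n₁*(N*(ts+n₂)^(N-1)) := by
        rw [hdeq]
        have iden : (-(m₁*(ts+m₂)^M * ρ ts - n₁*(ts+n₂)^N)^2/2 + A ts*(ρ ts)^2 - ρ ts + 1)
            - (m₁*(M*(ts+m₂)^(M-1))*(ρ ts)
              + (m₁*(ts+m₂)^M)*(-(ρ ts)*(m₁*(ts+m₂)^M * ρ ts - n₁*(ts+n₂)^N)))
            + n₁*(N*(ts+n₂)^(N-1))
            = (m₁*(ts+m₂)^M)^2*(ρ ts)^2/2 + A ts*(ρ ts)^2
              - (1 + M*m₁*(ts+m₂)^(M-1))*(ρ ts)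
              + 1 - (n₁*(ts+n₂)^N)^2/2 + N*n₁*(ts+n₂)^(N-1) := by ring
        rw [iden]
        exact hzB
      refine ep_no_touch (hEEd ts hts0 htsT) hEder htspos ?_
      intro y hy0 hyts
      have hb := hbefore y hy0 hyts
      have := min_le_right (d y) (EE y)
      rw [hEz]
      linarith
  ------------------------------------------------------------------ ρ is nonincreasing
  have hρub : ∀ t : ℝ, 0 ≤ t → (t:EReal) < T → ρ t ≤ ρ 0 := by
    intro t₁ ht₁ hT₁
    have hcont : ContinuousOn ρ (Set.Icc 0 t₁) := fun y hy =>
      ((hρ y hy.1 (hcoe hy.2 hT₁)).continuousAt).continuousWithinAt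
    have hanti : AntitoneOn ρ (Set.Icc 0 t₁) := by
      apply antitoneOn_of_deriv_nonpos (convex_Icc 0 t₁) hcont
      · intro y hy
        rw [interior_Icc] at hy
        exact ((hρ y hy.1.le (hcoe hy.2.le hT₁)).differentiableAt).differentiableWithinAt
      · intro y hy
        rw [interior_Icc] at hy
        have h0y : 0 ≤ y := hy.1.le
        have hyT := hcoe hy.2.le hT₁
        rw [(hρ y h0y hyT).deriv]
        have h1 := hρpos y h0y hyT
        have h2 := (hkey y h0y hyT).1
        linarith [mul_pos h1 h2]
    exact hanti ⟨le_refl 0, ht₁⟩ ⟨ht₁, le_refl t₁⟩ ht₁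
  ------------------------------------------------------------------ upper bound for d
  have hBnn : 0 ≤ Real.sqrt (2*(K*(ρ 0)^2+1)) := Real.sqrt_nonneg _
  have hBsq : Real.sqrt (2*(K*(ρ 0)^2+1))^2 = 2*(K*(ρ 0)^2+1) :=
    Real.sq_sqrt (by positivity)
  set D := max (d 0) (Real.sqrt (2*(K*(ρ 0)^2+1))) + 1 with hDdef
  have hDd0 : d 0 < D := by
    rw [hDdef]; linarith [le_max_left (d 0) (Real.sqrt (2*(K*(ρ 0)^2+1)))]
  have hDB : Real.sqrt (2*(K*(ρ 0)^2+1)) + 1 ≤ D := by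
    rw [hDdef]; linarith [le_max_right (d 0) (Real.sqrt (2*(K*(ρ 0)^2+1)))]
  have hD0 : 0 < D := by linarith
  have hdub : ∀ t : ℝ, 0 ≤ t → (t:EReal) < T → d t < D := by
    intro t₁ ht₁ hT₁
    by_contra hcon
    push_neg at hcon
    have hmemsub : ∀ y, y ∈ Set.Icc (0:ℝ) t₁ → 0 ≤ y ∧ (y:EReal) < T :=
      fun y hy => ⟨hy.1, hcoe hy.2 hT₁⟩
    have hdcont : ContinuousOn d (Set.Icc 0 t₁) := fun y hy =>
      ((hd y (hmemsub y hy).1 (hmemsub y hy).2).continuousAt).continuousWithinAt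
    set Z := Set.Icc (0:ℝ) t₁ ∩ d ⁻¹' (Set.Ici D) with hZdef
    have hZne : Z.Nonempty := ⟨t₁, ⟨⟨ht₁, le_refl _⟩, hcon⟩⟩
    have hZclosed : IsClosed Z :=
      hdcont.preimage_isClosed_of_isClosed isClosed_Icc isClosed_Ici
    have hZbdd : BddBelow Z := ⟨0, fun y hy => hy.1.1⟩
    have htsZ : sInf Z ∈ Z := hZclosed.csInf_mem hZne hZbdd
    set ts := sInf Z with htsdef
    have hts0 : 0 ≤ ts := htsZ.1.1
    have htst₁ : ts ≤ t₁ := htsZ.1.2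
    have htsT : (ts:EReal) < T := hcoe htst₁ hT₁
    have hdts : D ≤ d ts := htsZ.2
    have htspos : 0 < ts := by
      rcases eq_or_lt_of_le hts0 with h | h
      · exfalso
        have := htsZ.2
        simp only [Set.mem_preimage, Set.mem_Ici, ← h] at this
        linarith
      · exact h
    have hbefore : ∀ y, 0 < y → y < ts → d y < D := by
      intro y hy0 hyts
      by_contra hWy
      push_neg at hWy
      have hyZ : y ∈ Z := ⟨⟨hy0.le, le_trans hyts.le htst₁⟩, hWy⟩
      have := csInf_le hZbdd hyZ
      rw [← htsdef] at this
      linarith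
    have hρts := hρpos ts hts0 htsT
    have hρbts := hρub ts hts0 htsT
    have h1 : A ts*(ρ ts)^2 ≤ K*(ρ ts)^2 :=
      mul_le_mul_of_nonneg_right (hAub ts hts0 htsT) (sq_nonneg _)
    have h2 : K*(ρ ts)^2 ≤ K*(ρ 0)^2 :=
      mul_le_mul_of_nonneg_left (pow_le_pow_left₀ hρts.le hρbts 2) hK.le
    have h3 : D^2 ≤ (d ts)^2 := pow_le_pow_left₀ hD0.le hdts 2
    have h4 : (Real.sqrt (2*(K*(ρ 0)^2+1)) + 1)^2 ≤ D^2 :=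
      pow_le_pow_left₀ (by linarith) hDB 2
    have hder : -(d ts)^2/2 + A ts*(ρ ts)^2 - ρ ts + 1 < 0 := by
      linarith [h1, h2, h3, h4, hBsq, hρts, hBnn]
    refine ep_no_touch (f := fun y => -d y) ((hd ts hts0 htsT).neg) (by linarith) htspos ?_
    intro y hy0 hyts
    have hb := hbefore y hy0 hyts
    simp only [neg_lt_neg_iff]
    linarith
  ------------------------------------------------------------------ conclusion
  refine ⟨max (ρ 0) D, lt_of_lt_of_le hρ0 (le_max_left _ _), ?_⟩
  intro t h1 h2
  exact ⟨⟨hρpos t h1 h2, le_trans (hρub t h1 h2) (le_max_left _ _)⟩,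
    ⟨(hkey t h1 h2).1, le_trans (hdub t h1 h2).le (le_max_right _ _)⟩⟩
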